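/- Let A be an m×n matrix of rank m over a field, let M be the vector matroid formed by the columns of A, and let (T, f, g) be an extended depth-decomposition of M with Im(g) = {w_1, ..., w_m}. Then the (unique) m×n matrix A' satisfying that the j-th column of A equals Σ_{i=1}^m A'_{ij} w_i for every j has dual tree-depth at most the depth of T. -/

import Mathlib

/-! Infrastructure: rooted trees, depth-decompositions and branch-depth of matroids,
following the definitions of Kardoš, Král', Liebenau, Mach and of the paper
"Optimal matrix tree-depth and a row-invariant parameterized algorithm for
integer programming". -/

/-- A rooted tree on a (nonempty) finite vertex type `V`, given by its root and its
parent function: the parent of the root is the root itself, and from any vertex the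
root is reached by iterating the parent function. -/
structure RTree (V : Type) [Fintype V] [DecidableEq V] where
  root : V
  parent : V → V
  parent_root : parent root = root
  reach : ∀ v : V, ∃ n : ℕ, parent^[n] v = root

namespace RTree

variable {V : Type} [Fintype V] [DecidableEq V]

/-- A vertex is a leaf if it has no children. -/
def IsLeaf (T : RTree V) (v : V) : Prop :=
  ∀ u : V, T.parent u = v → u = v

/-- The non-root vertices on the path from `v` to the root of `T`; they are in bijective
correspondence with the edges of this path (each such vertex corresponds to the edge
joining it to its parent). -/
def pathEdges (T : RTree V) (v : V) : Set V :=
  {u | u ≠ T.root ∧ ∃ n : ℕ, T.parent^[n] v = u}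

/-- The number of edges of the tree. -/
def edgeCount (T : RTree V) : ℕ := Fintype.card V - 1

/-- The depth of a vertex: the number of edges on the path from the root to it. -/
noncomputable def depthV (T : RTree V) (v : V) : ℕ :=
  sInf {n : ℕ | T.parent^[n] v = T.root}

/-- The depth of the tree: the maximum number of edges on a path from the root to a leaf. -/
noncomputable def depth (T : RTree V) : ℕ :=
  Finset.univ.sup T.depthV

/-- The descendants of a vertex `u` (including `u` itself). -/
def desc (T : RTree V) (u : V) : Set V := {w | ∃ n : ℕ, T.parent^[n] w = u}

/-- The number of children of a vertex. -/
noncomputable def childCount (T : RTree V) (u : V) : ℕ :=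
  {w : V | T.parent w = u ∧ w ≠ u}.ncard

/-- A rooted tree is a rooted path if every vertex has at most one child. -/
def IsRootedPath (T : RTree V) : Prop := ∀ u : V, T.childCount u ≤ 1

/-- `a` is a strict ancestor of `v`. -/
def IsStrictAncestor (T : RTree V) (a v : V) : Prop :=
  a ≠ v ∧ ∃ n : ℕ, T.parent^[n] v = a

/-- A branch of `T` consists of a vertex `u`, exactly one child `u'` of `u` and all
descendants of `u'`; it is hence determined by the non-root vertex `u'` and denoted
here by `u'`.  Its root is `parent u'`, its vertex set is `{parent u'} ∪ desc u'`, and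
its edge number `‖S‖` is `(desc u').ncard`.  The branch determined by `u'` is primary
if its root has at least two children and every (strict) ancestor of its root has
exactly one child. -/
def IsPrimaryBranch (T : RTree V) (u' : V) : Prop :=
  u' ≠ T.root ∧ 2 ≤ T.childCount (T.parent u') ∧
    ∀ a : V, T.IsStrictAncestor a (T.parent u') → T.childCount a = 1

end RTree

/-- `(T, f)` is a depth-decomposition of the matroid on ground set `X` with rank
function `rk` and rank `r`: `f` maps elements of the matroid to leaves of `T`, the
number of edges of `T` equals the rank `r` of the matroid, and the rank of every
`X' ⊆ X` is at most the number of edges contained in the union of the paths in `T`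
from the root to the vertices `f x`, `x ∈ X'`. -/
def IsDepthDecompOn {X V : Type} [Fintype V] [DecidableEq V]
    (rk : Set X → ℕ) (r : ℕ) (T : RTree V) (f : X → V) : Prop :=
  (∀ x : X, T.IsLeaf (f x)) ∧ T.edgeCount = r ∧
    ∀ X' : Set X, rk X' ≤ (⋃ x ∈ X', T.pathEdges (f x)).ncard

/-- The branch-depth of the matroid on ground set `X` with rank function `rk` and
rank `r`: the smallest depth of a rooted tree forming a depth-decomposition. -/
noncomputable def branchDepth {X : Type} (rk : Set X → ℕ) (r : ℕ) : ℕ :=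
  sInf {d : ℕ | ∃ (nV : ℕ) (T : RTree (Fin (nV + 1))) (f : X → Fin (nV + 1)),
    IsDepthDecompOn rk r T f ∧ T.depth = d}

/-- The branch of `T` determined by the non-root vertex `u'` is at capacity: the rank
of the set `Ŝ` of matroid elements mapped by `f` to the leaves of the branch equals the
number `‖S‖` of edges of the branch plus the number of edges on the path from the root
of `T` to the root of the branch. -/
def AtCapacity {X V : Type} [Fintype V] [DecidableEq V]
    (rk : Set X → ℕ) (T : RTree V) (f : X → V) (u' : V) : Prop :=
  rk {x | f x ∈ T.desc u'} = (T.desc u').ncard + T.depthV (T.parent u')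

/-- The rank function of the vector matroid formed by the family of vectors `v`:
the rank of a subset is the dimension of its linear hull. -/
noncomputable def vecRk (F : Type) {W ι : Type} [Field F] [AddCommGroup W] [Module F W]
    (v : ι → W) (S : Set ι) : ℕ :=
  Module.finrank F (Submodule.span F (v '' S))

/-- `(T, f, g)` is an extended depth-decomposition of the vector matroid formed by the
family of vectors `v`: `(T, f)` is a depth-decomposition, the images under `g` of the
non-root vertices of `T` form a basis of the linear hull of the vectors, and every
vector `v x` lies in the linear hull of the `g`-image of the non-root vertices on the
path from `f x` to the root. -/
def IsExtDepthDecomp (F : Type) {W ι V : Type} [Field F] [AddCommGroup W] [Module F W]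
    [Fintype V] [DecidableEq V] (v : ι → W) (T : RTree V) (f : ι → V) (g : V → W) : Prop :=
  IsDepthDecompOn (vecRk F v) (vecRk F v Set.univ) T f ∧
  LinearIndependent F (fun u : {u : V // u ≠ T.root} => g u.val) ∧
  Submodule.span F (g '' {u : V | u ≠ T.root}) = Submodule.span F (Set.range v) ∧
  ∀ x : ι, v x ∈ Submodule.span F (g '' T.pathEdges (f x))

/-- The rank function of the vector matroid formed by the columns of a matrix `A`. -/
noncomputable def matRk {F : Type} [Field F] {m n : ℕ} (A : Matrix (Fin m) (Fin n) F)
    (S : Set (Fin n)) : ℕ :=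
  vecRk F (fun j => A.transpose j) S

/-- The branch-depth of a matrix `A`: the branch-depth of the vector matroid formed by
the columns of `A`. -/
noncomputable def matBranchDepth {F : Type} [Field F] {m n : ℕ}
    (A : Matrix (Fin m) (Fin n) F) : ℕ :=
  branchDepth (matRk A) (matRk A Set.univ)

/-- The dual graph of a matrix `A`: vertices are the rows of `A`, two distinct rows
being adjacent if some column of `A` has a non-zero entry in both of them. -/
def dualGraph {F : Type} [Field F] {m n : ℕ} (A : Matrix (Fin m) (Fin n) F) :
    SimpleGraph (Fin m) where
  Adj i i' := i ≠ i' ∧ ∃ j : Fin n, A i j ≠ 0 ∧ A i' j ≠ 0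
  symm := ⟨by
    rintro i i' ⟨h1, j, h2, h3⟩
    exact ⟨h1.symm, j, h3, h2⟩⟩
  loopless := ⟨fun i h => h.1 rfl⟩

/-- A rooted forest on a finite vertex type `V`, given by its parent function: the roots
are the fixed points of the parent function, and iterating the parent function from any
vertex reaches a root. -/
structure RForest (V : Type) [Fintype V] [DecidableEq V] where
  parent : V → V
  reach : ∀ v : V, ∃ n : ℕ, parent (parent^[n] v) = parent^[n] v

namespace RForest

variable {V : Type} [Fintype V] [DecidableEq V]

/-- The depth of a vertex: the number of edges on the path from the root of its tree. -/
noncomputable def depthV (Fo : RForest V) (v : V) : ℕ :=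
  sInf {n : ℕ | Fo.parent (Fo.parent^[n] v) = Fo.parent^[n] v}

/-- The height of a rooted forest: the maximum number of vertices on a path from a root
to a leaf. -/
noncomputable def height (Fo : RForest V) : ℕ :=
  Finset.univ.sup fun v => Fo.depthV v + 1

/-- The closure of the rooted forest `Fo` (obtained by adding edges from each vertex to
all its descendants) contains the graph `G` as a subgraph. -/
def ClosureContains (Fo : RForest V) (G : SimpleGraph V) : Prop :=
  ∀ u v : V, G.Adj u v → (∃ n : ℕ, Fo.parent^[n] v = u) ∨ (∃ n : ℕ, Fo.parent^[n] u = v)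

end RForest

/-- The tree-depth of a graph `G`: the minimum height of a rooted forest whose closure
contains `G` as a subgraph. -/
noncomputable def treeDepth {V : Type} [Fintype V] [DecidableEq V] (G : SimpleGraph V) : ℕ :=
  sInf {h : ℕ | ∃ Fo : RForest V, Fo.ClosureContains G ∧ Fo.height = h}

/-- Theorem: change of basis along an extended depth-decomposition.
Let `A` be an `m × n` matrix of rank `m` over a field, let `M` be the vector matroid
formed by the columns of `A` and let `(T, f, g)` be an extended depth-decomposition of
`M` with `Im(g) = {w 0, …, w (m-1)}`.  Then the `m × n` matrix `A'` expressing each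
column of `A` in the basis `w` has dual tree-depth at most the depth of `T`. -/
theorem dual_treeDepth_le_depth_of_extDepthDecomp (F : Type) [Field F] (m n : ℕ)
    (A : Matrix (Fin m) (Fin n) F) (hA : A.rank = m)
    {V : Type} [Fintype V] [DecidableEq V]
    (T : RTree V) (f : Fin n → V) (g : V → (Fin m → F))
    (hext : IsExtDepthDecomp F (fun j => A.transpose j) T f g)
    (w : Fin m → (Fin m → F)) (hw : g '' {u : V | u ≠ T.root} = Set.range w)
    (A' : Matrix (Fin m) (Fin n) F)
    (hA' : ∀ j : Fin n, (fun i => A i j) = ∑ i : Fin m, A' i j • w i) :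
    treeDepth (dualGraph A') ≤ T.depth := by
    classical
  obtain ⟨hdd, hli, hspan, hpath⟩ := hext
  set v : Fin n → (Fin m → F) := fun j => A.transpose j with hv
  -- the columns of A span the whole space
  have hspan_top : Submodule.span F (Set.range v) = ⊤ := by
    apply Submodule.eq_top_of_finrank_eq
    have : Set.range v = Set.range A.col := rfl
    rw [this, ← Matrix.rank_eq_finrank_span_cols, hA, Module.finrank_pi, Fintype.card_fin]
  have hgtop : Submodule.span F (g '' {u : V | u ≠ T.root}) = ⊤ :=
    hspan.trans hspan_top
  -- the g-image of the non-root vertices is a linearly independent set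
  have hrangeq : Set.range (fun u : {u : V // u ≠ T.root} => g u.val)
      = g '' {u : V | u ≠ T.root} := by
    rw [show (fun u : {u : V // u ≠ T.root} => g u.val) = g ∘ Subtype.val from rfl,
      Set.range_comp, Subtype.range_coe_subtype]
  have hsli : LinearIndependent F ((↑) : (g '' {u : V | u ≠ T.root}) → (Fin m → F)) := by
    have := hli.linearIndepOn_id
    rwa [hrangeq] at this
  -- that set has exactly m elements
  have hcard : (g '' {u : V | u ≠ T.root}).toFinset.card = m := by
    rw [← finrank_span_set_eq_card hsli]
    · rw [hgtop, finrank_top, Module.finrank_pi, Fintype.card_fin]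
  -- hence w is injective
  have hwinj : Function.Injective w := by
    have hcard2 : (Set.range w).toFinset.card = m := by
      rw [← Set.toFinset_congr hw]; exact hcard
    have h1 : (Finset.univ.image w).card = (Finset.univ : Finset (Fin m)).card := by
      rw [← Set.toFinset_range, hcard2, Finset.card_univ, Fintype.card_fin]
    have h2 := Finset.injOn_of_card_image_eq h1
    intro a b hab
    exact h2 (Finset.mem_univ a) (Finset.mem_univ b) hab
  have hginj : Function.Injective (fun u : {u : V // u ≠ T.root} => g u.val) :=
    hli.injective
  -- the bijection e between Fin m and the non-root vertices, with g (e i) = w i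
  have hexists : ∀ i : Fin m, ∃ u : {u : V // u ≠ T.root}, g u.val = w i := by
    intro i
    have : w i ∈ g '' {u : V | u ≠ T.root} := by rw [hw]; exact Set.mem_range_self i
    obtain ⟨u, hu, hgu⟩ := this
    exact ⟨⟨u, hu⟩, hgu⟩
  choose e he using hexists
  have heinj : Function.Injective e := fun i i' h => hwinj (by rw [← he, ← he, h])
  have hesurj : Function.Surjective e := by
    intro u
    have : g u.val ∈ Set.range w := by rw [← hw]; exact Set.mem_image_of_mem g u.2
    obtain ⟨i, hi⟩ := this
    exact ⟨i, hginj (show g (e i).val = g u.val from (he i).trans hi)⟩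
  -- w is a basis
  have hwli : LinearIndependent F w := by
    have hco : w = (fun u : {u : V // u ≠ T.root} => g u.val) ∘ e :=
      funext fun i => (he i).symm
    rw [hco]
    exact hli.comp e heinj
  have hwsp : ⊤ ≤ Submodule.span F (Set.range w) := by rw [← hw, hgtop]
  let b : Module.Basis (Fin m) F (Fin m → F) := Module.Basis.mk hwli hwsp
  have hb : ∀ i, b i = w i := fun i => Module.Basis.mk_apply hwli hwsp i
  -- the coordinates of column j in the basis b are given by A'
  have hrepr : ∀ (j : Fin n) (i : Fin m), b.repr (v j) i = A' i j := by
    intro j i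
    have hvj : v j = ∑ i, A' i j • b i := by
      have h1 : v j = fun i => A i j := by
        funext i; exact Matrix.transpose_apply A j i
      rw [h1, hA' j]
      exact Finset.sum_congr rfl fun i _ => by rw [hb]
    rw [hvj, b.repr_sum_self]
  -- nonzero entries of column j correspond to vertices on the path from f j
  have hsupp : ∀ (j : Fin n) (i : Fin m), A' i j ≠ 0 → (e i).val ∈ T.pathEdges (f j) := by
    intro j i hij
    have hmem : v j ∈ Submodule.span F (g '' T.pathEdges (f j)) := hpath j
    have himg : g '' T.pathEdges (f j) = b '' {i : Fin m | (e i).val ∈ T.pathEdges (f j)} := by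
      ext x
      constructor
      · rintro ⟨u, hu, rfl⟩
        obtain ⟨i', hi'⟩ := hesurj ⟨u, hu.1⟩
        refine ⟨i', ?_, ?_⟩
        · have hm : (e i').val ∈ T.pathEdges (f j) := by rw [hi']; exact hu
          exact hm
        · rw [hb]; rw [← he i', hi']
      · rintro ⟨i', hi', rfl⟩
        exact ⟨(e i').val, hi', by rw [hb]; exact he i'⟩
    rw [himg, b.mem_span_image] at hmem
    apply hmem
    rw [Finset.mem_coe, Finsupp.mem_support_iff, hrepr]
    exact hij
  -- basic facts about depths in T
  have hroot_iter : ∀ k : ℕ, T.parent^[k] T.root = T.root := by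
    intro k
    induction k with
    | zero => rfl
    | succ k ih => rw [Function.iterate_succ_apply', ih, T.parent_root]
  have hdV_mem : ∀ u : V, T.parent^[T.depthV u] u = T.root := by
    intro u
    have hne : {n : ℕ | T.parent^[n] u = T.root}.Nonempty := T.reach u
    exact Nat.sInf_mem hne
  have hdV_min : ∀ (u : V) (k : ℕ), k < T.depthV u → T.parent^[k] u ≠ T.root :=
    fun u k hk => Nat.notMem_of_lt_sInf hk
  have hdV_pos : ∀ i : Fin m, 1 ≤ T.depthV (e i).val := by
    intro i
    by_contra hcon
    push_neg at hcon
    have h0 : T.depthV (e i).val = 0 := by omega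
    have h1 := hdV_mem (e i).val
    rw [h0] at h1
    exact (e i).2 h1
  -- the equivalence and parent function on Fin m
  let E : Fin m ≃ {u : V // u ≠ T.root} := Equiv.ofBijective e ⟨heinj, hesurj⟩
  have hEe : ∀ x, e (E.symm x) = x := fun x => E.apply_symm_apply x
  let P : Fin m → Fin m := fun i =>
    if h : T.parent (e i).val = T.root then i else E.symm ⟨T.parent (e i).val, h⟩
  have hP1 : ∀ i, T.parent (e i).val = T.root → P i = i := by
    intro i h; simp only [P, dif_pos h]
  have hP2 : ∀ (i : Fin m), T.parent (e i).val ≠ T.root →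
      (e (P i)).val = T.parent (e i).val := by
    intro i h
    simp only [P, dif_neg h]
    rw [hEe]
  -- the key commuting lemma for iterates
  have keyC : ∀ (k : ℕ) (i : Fin m), T.parent^[k] ((e i).val) ≠ T.root →
      (e (P^[k] i)).val = T.parent^[k] ((e i).val) := by
    intro k
    induction k with
    | zero => intro i _; rfl
    | succ k ih =>
      intro i hk
      have hk' : T.parent^[k] ((e i).val) ≠ T.root := by
        intro h
        apply hk
        rw [Function.iterate_succ_apply', h, T.parent_root]
      have h1 := ih i hk'
      have hk2 : T.parent ((e (P^[k] i)).val) ≠ T.root := by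
        rw [h1]
        rwa [Function.iterate_succ_apply'] at hk
      calc (e (P^[k + 1] i)).val = (e (P (P^[k] i))).val := by
              rw [Function.iterate_succ_apply']
        _ = T.parent ((e (P^[k] i)).val) := hP2 _ hk2
        _ = T.parent (T.parent^[k] ((e i).val)) := by rw [h1]
        _ = T.parent^[k + 1] ((e i).val) := by rw [Function.iterate_succ_apply']
  -- fixed points of P reached within depthV(e i) - 1 steps
  have hfix : ∀ i : Fin m, P (P^[T.depthV (e i).val - 1] i) = P^[T.depthV (e i).val - 1] i := by
    intro i
    set d := T.depthV (e i).val with hd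
    have hd1 : 1 ≤ d := hdV_pos i
    have hne : T.parent^[d - 1] ((e i).val) ≠ T.root := hdV_min _ _ (by omega)
    have h1 := keyC (d - 1) i hne
    apply hP1
    have hgoal := hdV_mem ((e i).val)
    rw [← hd, show d = (d - 1) + 1 by omega, Function.iterate_succ_apply'] at hgoal
    rw [h1]
    exact hgoal
  let Fo : RForest (Fin m) := ⟨P, fun i => ⟨T.depthV (e i).val - 1, hfix i⟩⟩
  -- the closure of Fo contains the dual graph of A'
  have hclos : Fo.ClosureContains (dualGraph A') := by
    rintro i i' ⟨-, j, hij, hij'⟩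
    obtain ⟨-, a, ha⟩ := hsupp j i hij
    obtain ⟨hne', c, hc⟩ := hsupp j i' hij'
    rcases le_total a c with hac | hac
    · right
      refine ⟨c - a, ?_⟩
      apply heinj
      apply Subtype.val_injective
      have hiter : T.parent^[c - a] ((e i).val) = (e i').val := by
        rw [← ha, ← Function.iterate_add_apply, show c - a + a = c by omega, hc]
      rw [keyC (c - a) i (by rw [hiter]; exact hne'), hiter]
    · left
      refine ⟨a - c, ?_⟩
      apply heinj
      apply Subtype.val_injective
      have hiter : T.parent^[a - c] ((e i').val) = (e i).val := by
        rw [← hc, ← Function.iterate_add_apply, show a - c + c = a by omega, ha]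
      obtain ⟨hne'', -⟩ := hsupp j i hij
      rw [keyC (a - c) i' (by rw [hiter]; exact hne''), hiter]
  -- conclude
  have h1 : treeDepth (dualGraph A') ≤ Fo.height := Nat.sInf_le ⟨Fo, hclos, rfl⟩
  refine h1.trans ?_
  apply Finset.sup_le
  intro i _
  have h2 : Fo.depthV i ≤ T.depthV (e i).val - 1 :=
    Nat.sInf_le (hfix i)
  have h3 : T.depthV (e i).val ≤ T.depth := Finset.le_sup (Finset.mem_univ _)
  have h4 := hdV_pos i
  omega
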